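/- Let d ≥ 1 and let p be a prime not dividing d such that gcd(d, p-1) = 1. Then u_diag(d, ℚ_p) = d: every diagonal form of degree d over ℚ_p in more than d variables is isotropic, and the form ⟨1, p, p², ..., p^{d-1}⟩ of degree d and dimension d is anisotropic over ℚ_p. -/

import Mathlib

open Finset

-- every element of ZMod p is a d-th power
lemma aux_pow_surj_zmod (p : ℕ) [Fact p.Prime] (d : ℕ) (hd : 1 ≤ d)
    (hg : Nat.gcd d (p - 1) = 1) (u : ZMod p) : ∃ b : ZMod p, b ^ d = u := by
  rcases eq_or_ne u 0 with rfl | hu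
  · exact ⟨0, zero_pow (by omega)⟩
  · have hco : Nat.Coprime (Nat.card (ZMod p)ˣ) d := by
      rw [Nat.card_eq_fintype_card, ZMod.card_units p]
      exact (Nat.coprime_comm.mp hg)
    obtain ⟨w, hw⟩ := hco.pow_left_bijective.surjective (hu.isUnit.unit)
    exact ⟨(w : ZMod p), by simpa using congrArg Units.val hw⟩

-- every norm-1 element of ℚ_p is a d-th power
lemma aux_unit_pow (p : ℕ) [Fact p.Prime] (d : ℕ) (hd : 1 ≤ d) (hpd : ¬p ∣ d)
    (hg : Nat.gcd d (p - 1) = 1) (u : ℚ_[p]) (hu : ‖u‖ = 1) :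
    ∃ w : ℚ_[p], w ≠ 0 ∧ w ^ d = u := by
  set U : ℤ_[p] := ⟨u, hu.le⟩ with hU
  have hUnorm : ‖U‖ = 1 := hu
  have hUunit : IsUnit U := PadicInt.isUnit_iff.mpr hUnorm
  have hUz : PadicInt.toZMod U ≠ 0 := by
    intro h
    have : U ∈ IsLocalRing.maximalIdeal ℤ_[p] := by
      rw [← PadicInt.ker_toZMod]; exact h
    rw [IsLocalRing.mem_maximalIdeal] at this
    exact this hUunit
  obtain ⟨b, hb⟩ := aux_pow_surj_zmod p d hd hg (PadicInt.toZMod U)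
  have hbz : b ≠ 0 := by
    intro h; rw [h, zero_pow (by omega)] at hb; exact hUz hb.symm
  set a : ℤ_[p] := (b.val : ℤ_[p]) with ha
  have hta : PadicInt.toZMod a = b := by
    rw [ha, map_natCast, ZMod.natCast_val, ZMod.cast_id]
  have hanorm : ‖a‖ = 1 := by
    rcases lt_or_eq_of_le (PadicInt.norm_le_one a) with h | h
    · exfalso
      have : a ∈ IsLocalRing.maximalIdeal ℤ_[p] := by
        rw [IsLocalRing.mem_maximalIdeal]
        exact PadicInt.not_isUnit_iff.mpr h
      rw [← PadicInt.ker_toZMod] at this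
      exact hbz (hta ▸ this)
    · exact h
  have hdnorm : ‖(d : ℤ_[p])‖ = 1 := by
    rcases lt_or_eq_of_le (PadicInt.norm_le_one (d : ℤ_[p])) with h | h
    · exfalso
      have : ‖((d : ℤ) : ℤ_[p])‖ < 1 := by push_cast; exact h
      rw [PadicInt.norm_int_lt_one_iff_dvd] at this
      exact hpd (Int.ofNat_dvd.mp this)
    · exact h
  set F : Polynomial ℤ_[p] := Polynomial.X ^ d - Polynomial.C U with hF
  have hFa : ‖F.eval a‖ < 1 := by
    have hmem : a ^ d - U ∈ IsLocalRing.maximalIdeal ℤ_[p] := by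
      rw [← PadicInt.ker_toZMod]
      show PadicInt.toZMod (a ^ d - U) = 0
      rw [map_sub, map_pow, hta, hb, sub_self]
    rw [IsLocalRing.mem_maximalIdeal] at hmem
    have := PadicInt.not_isUnit_iff.mp hmem
    simpa [hF] using this
  have hF' : F.derivative.eval a = (d : ℤ_[p]) * a ^ (d - 1) := by
    simp [hF, Polynomial.derivative_X_pow]
  have hF'norm : ‖F.derivative.eval a‖ = 1 := by
    rw [hF', norm_mul, norm_pow, hanorm, hdnorm, one_pow, mul_one]
  have hnorm : ‖F.eval a‖ < ‖F.derivative.eval a‖ ^ 2 := by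
    rw [hF'norm]; simpa using hFa
  obtain ⟨z, hz, -, -, -⟩ := hensels_lemma hnorm
  have hzd : z ^ d = U := by
    have : Polynomial.aeval z F = z ^ d - U := by simp [hF]
    rw [this] at hz; exact sub_eq_zero.mp hz
  have hz0 : (z : ℚ_[p]) ≠ 0 := by
    intro h
    have : U = 0 := by rw [← hzd]; exact_mod_cast (by rw [PadicInt.coe_eq_zero] at h; rw [h, zero_pow (by omega)])
    rw [hU] at this
    have : u = 0 := congrArg Subtype.val this
    rw [this] at hu; simp at hu
  refine ⟨(z : ℚ_[p]), hz0, ?_⟩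
  have := congrArg (Subtype.val) hzd
  push_cast at this
  exact this

-- every nonzero x in ℚ_p is p^r * c^d with r < d
lemma aux_rep (p : ℕ) [Fact p.Prime] (d : ℕ) (hd : 1 ≤ d) (hpd : ¬p ∣ d)
    (hg : Nat.gcd d (p - 1) = 1) (x : ℚ_[p]) (hx : x ≠ 0) :
    ∃ (r : Fin d) (c : ℚ_[p]), c ≠ 0 ∧ x = (p : ℚ_[p]) ^ (r : ℕ) * c ^ d := by
  have hp0 : (p : ℚ_[p]) ≠ 0 := Nat.cast_ne_zero.mpr (Fact.out : p.Prime).ne_zero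
  have hpR : (0:ℝ) < (p:ℝ) := by exact_mod_cast (Fact.out : p.Prime).pos
  set v : ℤ := x.valuation with hv
  have hunorm : ‖x * (p : ℚ_[p]) ^ (-v)‖ = 1 := by
    rw [norm_mul, Padic.norm_p_zpow, Padic.norm_eq_zpow_neg_valuation hx, neg_neg,
      ← zpow_add₀ (ne_of_gt hpR), neg_add_cancel, zpow_zero]
  obtain ⟨w, hw0, hwd⟩ := aux_unit_pow p d hd hpd hg _ hunorm
  have hdz : (0:ℤ) < (d:ℤ) := by exact_mod_cast hd
  have hr1 : 0 ≤ v % (d:ℤ) := Int.emod_nonneg v (by omega)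
  have hr2 : v % (d:ℤ) < d := Int.emod_lt_of_pos v hdz
  refine ⟨⟨(v % (d:ℤ)).toNat, by omega⟩, (p : ℚ_[p]) ^ (v / (d:ℤ)) * w, ?_, ?_⟩
  · exact mul_ne_zero (zpow_ne_zero _ hp0) hw0
  · have hcoe : ((⟨(v % (d:ℤ)).toNat, by omega⟩ : Fin d) : ℕ) = (v % (d:ℤ)).toNat := rfl
    rw [mul_pow, ← zpow_natCast ((p : ℚ_[p]) ^ (v / (d:ℤ))), ← zpow_mul, hwd, hcoe,
      ← zpow_natCast (p : ℚ_[p]) (v % (d:ℤ)).toNat, Int.toNat_of_nonneg hr1]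
    have h5 : v % (d:ℤ) + v / (d:ℤ) * (d:ℤ) = v := Int.emod_add_ediv_mul v d
    have key : (p:ℚ_[p])^(v % (d:ℤ)) * ((p:ℚ_[p])^((v/(d:ℤ))*(d:ℤ)) * (x * (p:ℚ_[p])^(-v)))
        = (p:ℚ_[p])^(v % (d:ℤ) + (v/(d:ℤ))*(d:ℤ) + (-v)) * x := by
      rw [zpow_add₀ hp0, zpow_add₀ hp0]; ring
    rw [key]
    have hexp : v % (d:ℤ) + (v/(d:ℤ))*(d:ℤ) + (-v) = 0 := by omega
    rw [hexp, zpow_zero, one_mul]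

theorem stmt_18 (p : ℕ) [Fact p.Prime] (d : ℕ) (hd : 1 ≤ d) (hpd : ¬p ∣ d)
    (hg : Nat.gcd d (p - 1) = 1) :
    (∀ n : ℕ, d < n → ∀ a : Fin n → ℚ_[p], (∀ i, a i ≠ 0) →
        ∃ x : Fin n → ℚ_[p], x ≠ 0 ∧ ∑ i, a i * x i ^ d = 0) ∧
      ∀ x : Fin d → ℚ_[p], ∑ i : Fin d, (p : ℚ_[p]) ^ (i : ℕ) * x i ^ d = 0 → x = 0 := by
  have hp0 : (p : ℚ_[p]) ≠ 0 := Nat.cast_ne_zero.mpr (Fact.out : p.Prime).ne_zero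
  constructor
  · intro n hn a ha
    choose r c hc hac using fun i => aux_rep p d hd hpd hg (a i) (ha i)
    obtain ⟨i, j, hij, hrij⟩ := Fintype.exists_ne_map_eq_of_card_lt r
      (by simpa using hn)
    obtain ⟨e, he0, hed⟩ := aux_unit_pow p d hd hpd hg (-1) (by simp)
    refine ⟨fun k => if k = i then c j * e else if k = j then c i else 0, ?_, ?_⟩
    · intro h
      have := congrFun h j
      simp only [if_neg (Ne.symm hij), if_pos rfl, Pi.zero_apply] at this
      exact hc i this
    · have hz : ∀ k ∈ Finset.univ, k ∉ ({i, j} : Finset (Fin n)) →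
          a k * (if k = i then c j * e else if k = j then c i else 0) ^ d = 0 := by
        intro k _ hk
        simp only [Finset.mem_insert, Finset.mem_singleton, not_or] at hk
        rw [if_neg hk.1, if_neg hk.2, zero_pow (by omega), mul_zero]
      rw [← Finset.sum_subset (Finset.subset_univ {i, j}) hz,
        Finset.sum_pair hij]
      simp only [if_pos rfl, if_neg (Ne.symm hij), if_neg hij, if_true]
      rw [hac i, hac j, hrij, mul_pow, hed]
      ring
  · intro x hsum
    by_contra hx
    obtain ⟨i₀', hi₀'⟩ := Function.ne_iff.mp hx
    classical
    set t : Fin d → ℚ_[p] := fun i => (p : ℚ_[p]) ^ (i : ℕ) * x i ^ d with ht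
    set S : Finset (Fin d) := Finset.univ.filter (fun i => x i ≠ 0) with hS
    have hSne : S.Nonempty := ⟨i₀', by simp [hS]; exact hi₀'⟩
    have hpposR : (0:ℝ) < (p:ℝ) := by exact_mod_cast (Fact.out : p.Prime).pos
    have hp1R : ((p:ℝ)) ≠ 1 := by
      have := (Fact.out : p.Prime).one_lt; exact_mod_cast Nat.ne_of_gt this
    have hxS : ∀ i ∈ S, x i ≠ 0 := by intro i hi; simpa [hS] using hi
    have hnorm : ∀ i ∈ S, ‖t i‖ = (p:ℝ) ^ (-((i:ℤ) + (d:ℤ) * (x i).valuation)) := by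
      intro i hi
      rw [ht, norm_mul, Padic.norm_p_pow, norm_pow,
        Padic.norm_eq_zpow_neg_valuation (hxS i hi), ← zpow_natCast ((p:ℝ) ^ (-(x i).valuation)) d,
        ← zpow_mul, ← zpow_add₀ (ne_of_gt hpposR)]
      congr 1; ring
    have hinj : ∀ i ∈ S, ∀ j ∈ S, i ≠ j → ‖t i‖ ≠ ‖t j‖ := by
      intro i hi j hj hne heq
      rw [hnorm i hi, hnorm j hj] at heq
      have hexp := zpow_right_injective₀ hpposR hp1R heq
      have hexp' : (i:ℤ) + (d:ℤ) * (x i).valuation = (j:ℤ) + (d:ℤ) * (x j).valuation :=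
        neg_inj.mp hexp
      have hdvd : (d:ℤ) ∣ ((i:ℤ) - (j:ℤ)) :=
        ⟨(x j).valuation - (x i).valuation, by linarith⟩
      have h0 := Int.eq_zero_of_dvd_of_natAbs_lt_natAbs hdvd
        (by have := i.isLt; have := j.isLt; omega)
      exact hne (Fin.ext (by have := i.isLt; have := j.isLt; omega))
    obtain ⟨i₀, hi₀S, hmax⟩ := S.exists_max_image (fun i => ‖t i‖) hSne
    have htne : t i₀ ≠ 0 :=
      mul_ne_zero (pow_ne_zero _ hp0) (pow_ne_zero _ (hxS i₀ hi₀S))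
    have hrest : ‖∑ k ∈ S.erase i₀, t k‖ < ‖t i₀‖ := by
      rcases (S.erase i₀).eq_empty_or_nonempty with h | h
      · rw [h, Finset.sum_empty, norm_zero]; exact norm_pos_iff.mpr htne
      · refine lt_of_le_of_lt (h.norm_sum_le_sup'_norm t) ?_
        obtain ⟨j, hj, hjeq⟩ := Finset.exists_mem_eq_sup' h (fun k => ‖t k‖)
        rw [hjeq]
        have hjS := Finset.mem_of_mem_erase hj
        have hjne := Finset.ne_of_mem_erase hj
        exact lt_of_le_of_ne (hmax j hjS) (hinj j hjS i₀ hi₀S hjne)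
    have hsum' : ∑ k ∈ S, t k = 0 := by
      rw [← hsum]
      apply Finset.sum_subset (Finset.subset_univ S)
      intro k _ hk
      have : x k = 0 := by simpa [hS] using hk
      simp [ht, this, zero_pow (show d ≠ 0 by omega)]
    have hfin : ‖t i₀ + ∑ k ∈ S.erase i₀, t k‖ = ‖t i₀‖ := by
      rw [Padic.add_eq_max_of_ne (q := t i₀) (r := ∑ k ∈ S.erase i₀, t k) (ne_of_gt hrest)]
      exact max_eq_left hrest.le
    rw [Finset.add_sum_erase S t hi₀S, hsum', norm_zero] at hfin
    exact htne (norm_eq_zero.mp hfin.symm)
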